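/- Let θ ∈ (−π/2, π/2) and c > 0 be real numbers, and for t ≥ 0 define τ(t) = 2πi/(t·e^{iθ} + c) ∈ ℂ. Let d₁ > 0, r₂ > 0 and d₂ be real numbers, and for t sufficiently large set w(t) = Log(d₁·τ(t)/(r₂ + d₂·τ(t))), where Log denotes the principal branch of the complex logarithm. Then w(t) is defined for all sufficiently large t, Re w(t) → −∞ as t → ∞, Im w(t) is eventually bounded, and w(t)/(1 + |w(t)|) → −1 as t → ∞. -/

import Mathlib

open Complex Filter Topology

-- helper: s/(k-s) → -1 as s → -∞, for k real
lemma aux_div_tendsto (k : ℝ) : Tendsto (fun s : ℝ => s / (k - s)) atBot (𝓝 (-1)) := by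
  have h1 : Tendsto (fun s : ℝ => k - s) atBot atTop := by
    have := tendsto_atTop_add_const_left (atBot : Filter ℝ) k tendsto_neg_atBot_atTop
    simpa [sub_eq_add_neg] using this
  have h2 : Tendsto (fun s : ℝ => k * (k - s)⁻¹) atBot (𝓝 (k * 0)) :=
    (tendsto_inv_atTop_zero.comp h1).const_mul k
  have h3 : Tendsto (fun s : ℝ => -1 + k * (k - s)⁻¹) atBot (𝓝 (-1 + k * 0)) :=
    tendsto_const_nhds.add h2
  have key : ∀ᶠ s in (atTop : Filter ℝ).comap id, True := by simp
  refine Tendsto.congr' ?_ (by simpa using h3)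
  filter_upwards [eventually_lt_atBot k] with s hs
  have hks : k - s ≠ 0 := by linarith
  field_simp
  ring

lemma aux_const_div_tendsto (k : ℝ) : Tendsto (fun s : ℝ => k / (1 - s)) atBot (𝓝 0) := by
  have h1 : Tendsto (fun s : ℝ => 1 - s) atBot atTop := by
    have := tendsto_atTop_add_const_left (atBot : Filter ℝ) 1 tendsto_neg_atBot_atTop
    simpa [sub_eq_add_neg] using this
  simpa using ((tendsto_inv_atTop_zero.comp h1).const_mul k).congr (fun s => by
    simp [div_eq_mul_inv])

/-- With `τ(t) = 2πi/(t·e^{iθ} + c)` (`θ ∈ (−π/2,π/2)`, `c > 0`), `d₁ > 0`, `r₂ > 0`, and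
`w(t) = Log(d₁τ(t)/(r₂ + d₂τ(t)))`, the argument of the logarithm is eventually in the slit
plane (so `w` is defined for large `t`), `Re w(t) → −∞`, `Im w(t)` is eventually bounded,
and `w(t)/(1 + |w(t)|) → −1` as `t → ∞`. -/
theorem stmt11 (θ c : ℝ) (hθ : θ ∈ Set.Ioo (-(Real.pi / 2)) (Real.pi / 2)) (hc : 0 < c)
    (τ : ℝ → ℂ)
    (hτ : ∀ t : ℝ, τ t =
      (2 * (Real.pi : ℂ) * Complex.I) / ((t : ℂ) * Complex.exp ((θ : ℂ) * Complex.I) + (c : ℂ)))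
    (d₁ r₂ d₂ : ℝ) (hd₁ : 0 < d₁) (hr₂ : 0 < r₂)
    (w : ℝ → ℂ)
    (hw : ∀ t : ℝ, w t = Complex.log ((d₁ : ℂ) * τ t / ((r₂ : ℂ) + (d₂ : ℂ) * τ t))) :
    (∀ᶠ t in atTop, ((r₂ : ℂ) + (d₂ : ℂ) * τ t ≠ 0 ∧
        (d₁ : ℂ) * τ t / ((r₂ : ℂ) + (d₂ : ℂ) * τ t) ∈ Complex.slitPlane)) ∧
    Tendsto (fun t => (w t).re) atTop atBot ∧
    (∃ M : ℝ, 0 < M ∧ ∀ᶠ t in atTop, |(w t).im| ≤ M) ∧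
    Tendsto (fun t => w t / (1 + (‖w t‖ : ℂ))) atTop (𝓝 (-1)) := by
  have hπ := Real.pi_pos
  have hcos : 0 < Real.cos θ := Real.cos_pos_of_mem_Ioo hθ
  set Z : ℝ → ℂ := fun t => (d₁ : ℂ) * τ t / ((r₂ : ℂ) + (d₂ : ℂ) * τ t) with hZ
  -- denominator of τ nonzero for t ≥ 0
  have hexp : Complex.exp ((θ : ℂ) * Complex.I) = (Real.cos θ : ℂ) + (Real.sin θ : ℂ) * Complex.I := by
    rw [Complex.exp_mul_I, ← Complex.ofReal_cos, ← Complex.ofReal_sin]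
  have hden : ∀ t : ℝ, 0 ≤ t → (t : ℂ) * Complex.exp ((θ : ℂ) * Complex.I) + (c : ℂ) ≠ 0 := by
    intro t ht h0
    rw [hexp] at h0
    have h1 := congrArg Complex.re h0
    simp [Complex.add_re, Complex.mul_re, Complex.cos_ofReal_re] at h1
    nlinarith [mul_nonneg ht hcos.le]
  -- t * τ t → 2πI / exp(θ I)
  have hc0 : Tendsto (fun t : ℝ => ((c / t : ℝ) : ℂ)) atTop (𝓝 0) := by
    have : Tendsto (fun t : ℝ => c / t) atTop (𝓝 0) :=
      Tendsto.div_atTop tendsto_const_nhds tendsto_id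
    simpa [Function.comp_def] using (Complex.continuous_ofReal.tendsto 0).comp this
  have hu : Tendsto (fun t : ℝ => Complex.exp ((θ : ℂ) * Complex.I) + ((c / t : ℝ) : ℂ)) atTop
      (𝓝 (Complex.exp ((θ : ℂ) * Complex.I))) := by
    simpa using tendsto_const_nhds.add hc0
  have htτ : Tendsto (fun t : ℝ => (t : ℂ) * τ t) atTop
      (𝓝 (2 * (Real.pi : ℂ) * Complex.I / Complex.exp ((θ : ℂ) * Complex.I))) := by
    have hdiv : Tendsto (fun t : ℝ => 2 * (Real.pi : ℂ) * Complex.I /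
        (Complex.exp ((θ : ℂ) * Complex.I) + ((c / t : ℝ) : ℂ))) atTop
        (𝓝 (2 * (Real.pi : ℂ) * Complex.I / Complex.exp ((θ : ℂ) * Complex.I))) :=
      tendsto_const_nhds.div hu (Complex.exp_ne_zero _)
    refine hdiv.congr' ?_
    filter_upwards [eventually_gt_atTop (0 : ℝ)] with t ht
    have ht0 : (t : ℂ) ≠ 0 := by exact_mod_cast ht.ne'
    have hd := hden t ht.le
    have h2 : Complex.exp ((θ : ℂ) * Complex.I) + ((c / t : ℝ) : ℂ) =
        ((t : ℂ) * Complex.exp ((θ : ℂ) * Complex.I) + (c : ℂ)) / (t : ℂ) := by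
      push_cast
      field_simp
    rw [hτ t, h2, div_div_eq_mul_div]
    ring
  -- limit of t * Z t
  set K : ℂ := ((2 * Real.pi * d₁ / r₂ : ℝ) : ℂ) * ((Real.sin θ : ℂ) + (Real.cos θ : ℂ) * Complex.I) with hK
  have hKval : (d₁ : ℂ) * (2 * (Real.pi : ℂ) * Complex.I / Complex.exp ((θ : ℂ) * Complex.I)) / (r₂ : ℂ) = K := by
    rw [hexp, hK]
    have hs : Real.sin θ ^ 2 + Real.cos θ ^ 2 = 1 := Real.sin_sq_add_cos_sq θ
    have hr₂' : (r₂ : ℂ) ≠ 0 := by exact_mod_cast hr₂.ne'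
    have he : ((Real.cos θ : ℂ) + (Real.sin θ : ℂ) * Complex.I) ≠ 0 := by
      rw [← hexp]; exact Complex.exp_ne_zero _
    have hsC : (Real.sin θ : ℂ) ^ 2 + (Real.cos θ : ℂ) ^ 2 = 1 := by exact_mod_cast hs
    have hE : Complex.exp ((θ:ℂ) * Complex.I) ≠ 0 := by rw [hexp]; exact he
    rw [show (d₁:ℂ) * (2*(Real.pi:ℂ)*Complex.I/(((Real.cos θ:ℂ)) + (Real.sin θ:ℂ)*Complex.I)) = ((d₁:ℂ) * (2*(Real.pi:ℂ)*Complex.I))/(((Real.cos θ:ℂ)) + (Real.sin θ:ℂ)*Complex.I) from by ring]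
    rw [div_div, div_eq_iff (mul_ne_zero he hr₂')]
    push_cast
    field_simp
    have hsC2 : Complex.sin (θ:ℂ) ^ 2 + Complex.cos (θ:ℂ) ^ 2 = 1 := Complex.sin_sq_add_cos_sq _
    linear_combination (-((d₁:ℂ) * Complex.I)) * hsC2 + (-((d₁:ℂ) * Complex.sin (θ:ℂ) * Complex.cos (θ:ℂ))) * Complex.I_sq
  -- τ → 0
  have hinv : Tendsto (fun t : ℝ => ((t : ℂ))⁻¹) atTop (𝓝 0) := by
    simpa [Function.comp_def] using (Complex.continuous_ofReal.tendsto 0).comp tendsto_inv_atTop_zero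
  have hτ0 : Tendsto τ atTop (𝓝 0) := by
    have h := htτ.mul hinv
    rw [mul_zero] at h
    refine h.congr' ?_
    filter_upwards [eventually_gt_atTop (0 : ℝ)] with t ht
    have ht0 : (t : ℂ) ≠ 0 := by exact_mod_cast ht.ne'
    field_simp
  have hr₂' : (r₂ : ℂ) ≠ 0 := by exact_mod_cast hr₂.ne'
  have hden₂ : Tendsto (fun t : ℝ => (r₂ : ℂ) + (d₂ : ℂ) * τ t) atTop (𝓝 (r₂ : ℂ)) := by
    have h := (hτ0.const_mul (d₂ : ℂ)).const_add (r₂ : ℂ)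
    simpa using h
  -- t * Z t → K
  have htZ : Tendsto (fun t : ℝ => (t : ℂ) * Z t) atTop (𝓝 K) := by
    have h := ((tendsto_const_nhds (x := (d₁:ℂ))).mul htτ).div hden₂ hr₂'
    rw [hKval] at h
    refine h.congr fun t => ?_
    simp only [hZ, Pi.div_apply]
    ring
  have hKim : 0 < K.im := by
    have : K.im = (2 * Real.pi * d₁ / r₂) * Real.cos θ := by
      rw [hK, Complex.im_ofReal_mul]
      simp [Complex.cos_ofReal_re]
    rw [this]
    positivity
  -- eventually Im (Z t) > 0
  have hev : ∀ᶠ t in atTop, 0 < (Z t).im := by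
    have h1 : Tendsto (fun t : ℝ => ((t : ℂ) * Z t).im) atTop (𝓝 K.im) :=
      (Complex.continuous_im.tendsto K).comp htZ
    have h2 : ∀ᶠ t : ℝ in atTop, 0 < ((t : ℂ) * Z t).im :=
      h1.eventually_const_lt hKim
    filter_upwards [h2, eventually_gt_atTop (0 : ℝ)] with t h2t ht
    rw [Complex.im_ofReal_mul] at h2t
    rcases mul_pos_iff.mp h2t with ⟨_, h⟩ | ⟨h, _⟩
    · exact h
    · linarith
  -- Z ≠ 0 eventually
  have hZne : ∀ᶠ t in atTop, Z t ≠ 0 := by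
    filter_upwards [hev] with t h h0
    rw [h0] at h
    simp at h
  -- first conjunct
  have hconj1 : ∀ᶠ t in atTop, ((r₂ : ℂ) + (d₂ : ℂ) * τ t ≠ 0 ∧
      (d₁ : ℂ) * τ t / ((r₂ : ℂ) + (d₂ : ℂ) * τ t) ∈ Complex.slitPlane) := by
    filter_upwards [hev] with t h
    refine ⟨fun h0 => ?_, Complex.mem_slitPlane_iff.mpr (Or.inr h.ne')⟩
    have : Z t = 0 := by rw [hZ]; simp [h0]
    rw [this] at h
    simp at h
  -- Z → 0 and |Z| → 0
  have hZ0 : Tendsto Z atTop (𝓝 0) := by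
    have h := htZ.mul hinv
    rw [mul_zero] at h
    refine h.congr' ?_
    filter_upwards [eventually_gt_atTop (0 : ℝ)] with t ht
    have ht0 : (t : ℂ) ≠ 0 := by exact_mod_cast ht.ne'
    field_simp
  have habs : Tendsto (fun t => ‖Z t‖) atTop (𝓝[>] 0) := by
    refine tendsto_nhdsWithin_of_tendsto_nhds_of_eventually_within _ ?_ ?_
    · simpa [Function.comp_def] using (continuous_norm.tendsto 0).comp hZ0
    · filter_upwards [hZne] with t h
      exact norm_pos_iff.mpr h
  -- Re w → -∞
  have hre : Tendsto (fun t => (w t).re) atTop atBot := by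
    have h3 := Real.tendsto_log_nhdsGT_zero.comp habs
    refine h3.congr fun t => ?_
    simp only [Function.comp_apply, hw t, Complex.log_re, hZ]
  -- |Im w| ≤ π
  have hb : ∀ t, |(w t).im| ≤ Real.pi := fun t => by
    rw [hw t, Complex.log_im]
    exact Complex.abs_arg_le_pi _
  refine ⟨hconj1, hre, ⟨Real.pi, hπ, Eventually.of_forall hb⟩, ?_⟩
  -- final limit
  set f : ℝ → ℝ := fun t => (w t).re / (1 + ‖w t‖) with hf'
  set g : ℝ → ℝ := fun t => (w t).im / (1 + ‖w t‖) with hg'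
  have hneg : ∀ᶠ t in atTop, (w t).re < 0 := hre.eventually (eventually_lt_atBot 0)
  have habspos : ∀ t, (0:ℝ) < 1 + ‖w t‖ := fun t => by positivity
  have hflim : Tendsto f atTop (𝓝 (-1)) := by
    refine tendsto_of_tendsto_of_tendsto_of_le_of_le' ((aux_div_tendsto 1).comp hre)
      ((aux_div_tendsto (1 + Real.pi)).comp hre) ?_ ?_
    · filter_upwards [hneg] with t ha
      have h1 : |(w t).re| ≤ ‖w t‖ := Complex.abs_re_le_norm _
      rw [abs_of_neg ha] at h1
      have h2 : (0:ℝ) < 1 - (w t).re := by linarith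
      rw [Function.comp_apply, div_le_div_iff₀ h2 (habspos t)]
      nlinarith
    · filter_upwards [hneg] with t ha
      have h1 : ‖w t‖ ≤ |(w t).re| + |(w t).im| := Complex.norm_le_abs_re_add_abs_im _
      have h2 := hb t
      rw [abs_of_neg ha] at h1
      have h3 : (0:ℝ) < 1 + Real.pi - (w t).re := by linarith
      rw [Function.comp_apply, div_le_div_iff₀ (habspos t) h3]
      nlinarith
  have hglim : Tendsto g atTop (𝓝 0) := by
    have hup : Tendsto (fun t => Real.pi / (1 - (w t).re)) atTop (𝓝 0) :=
      (aux_const_div_tendsto Real.pi).comp hre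
    have hlo : Tendsto (fun t => -(Real.pi / (1 - (w t).re))) atTop (𝓝 0) := by
      simpa using hup.neg
    refine tendsto_of_tendsto_of_tendsto_of_le_of_le' hlo hup ?_ ?_ <;>
    · filter_upwards [hneg] with t ha
      have h1 : |(w t).re| ≤ ‖w t‖ := Complex.abs_re_le_norm _
      rw [abs_of_neg ha] at h1
      have h2 : (0:ℝ) < 1 - (w t).re := by linarith
      have key : |g t| ≤ Real.pi / (1 - (w t).re) := by
        rw [hg', abs_div, abs_of_pos (habspos t)]
        exact div_le_div₀ hπ.le (hb t) h2 (by linarith)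
      cases abs_le.mp key with
      | intro hl hr => first | linarith | linarith
  have hrw : ∀ t, w t / (1 + (‖w t‖ : ℂ)) = ((f t : ℝ) : ℂ) + ((g t : ℝ) : ℂ) * Complex.I := by
    intro t
    rw [show w t / (1 + (‖w t‖ : ℂ)) =
        (((w t).re : ℂ) + ((w t).im : ℂ) * Complex.I) / (1 + (‖w t‖ : ℂ)) from by
      rw [Complex.re_add_im]]
    simp only [hf', hg']
    push_cast
    ring
  have hfin : Tendsto (fun t => ((f t : ℝ) : ℂ) + ((g t : ℝ) : ℂ) * Complex.I) atTop
      (𝓝 (((-1 : ℝ) : ℂ) + ((0 : ℝ) : ℂ) * Complex.I)) :=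
    (((Complex.continuous_ofReal.tendsto _).comp hflim).add
      (((Complex.continuous_ofReal.tendsto _).comp hglim).mul_const Complex.I))
  have : Tendsto (fun t => w t / (1 + (‖w t‖ : ℂ))) atTop
      (𝓝 (((-1 : ℝ) : ℂ) + ((0 : ℝ) : ℂ) * Complex.I)) :=
    hfin.congr fun t => (hrw t).symm
  simpa using this
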